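/- Let d be even and let M be a (d-1)×d integer matrix whose rows are pairwise orthogonal vectors of squared norm N > 0. Define the row vector w by w_j = (-1)^j N^{(2-d)/2} det(M_{(j)}), where M_{(j)} is M with the j-th column deleted. Then w has integer entries, is orthogonal to every row of M, and ‖w‖² = N. -/

import Mathlib

theorem codim_one_vector (n : ℕ) (hd : Even (n + 1)) (N : ℤ) (hN : 0 < N)
    (M : Matrix (Fin n) (Fin (n + 1)) ℤ)
    (horth : ∀ i i' : Fin n, i ≠ i' → ∑ k, M i k * M i' k = 0)
    (hnorm : ∀ i : Fin n, ∑ k, (M i k) ^ 2 = N)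
    (w : Fin (n + 1) → ℚ)
    (hw : ∀ j : Fin (n + 1),
      w j = (-1) ^ (j : ℕ) * (N : ℚ) ^ (((2 : ℤ) - (n + 1)) / 2)
              * ((M.submatrix id j.succAbove).det : ℚ)) :
    (∀ j, ∃ z : ℤ, w j = (z : ℚ)) ∧
    (∀ i : Fin n, ∑ j, w j * (M i j : ℚ) = 0) ∧
    (∑ j, (w j) ^ 2 = (N : ℚ)) := by
  obtain ⟨m, hm⟩ : ∃ m, n = 2 * m + 1 := by
    obtain ⟨r, hr⟩ := hd; exact ⟨r - 1, by omega⟩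
  have hNq : (N : ℚ) ≠ 0 := by exact_mod_cast hN.ne'
  set v : Fin (n + 1) → ℤ := fun j => (M.submatrix id j.succAbove).det with hv
  have hexp : ((2 : ℤ) - ((n : ℕ) + 1)) / 2 = -(m : ℤ) := by
    subst hm; push_cast; omega
  have hwj : ∀ j, w j = (-1 : ℚ) ^ (j : ℕ) * ((N : ℚ) ^ m)⁻¹ * v j := by
    intro j
    rw [hw j]
    norm_num [hexp, _root_.zpow_neg, zpow_natCast]
    exact Or.inl rfl
  -- orthogonality via cofactor expansion
  have key1 : ∀ i : Fin n, ∑ j : Fin (n + 1), (-1 : ℤ) ^ (j : ℕ) * M i j * v j = 0 := by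
    intro i
    have e2 : (Matrix.of (Fin.cons (M i) M) : Matrix (Fin (n+1)) (Fin (n+1)) ℤ).det = 0 := by
      refine Matrix.det_zero_of_row_eq (i := 0) (j := i.succ) (Fin.succ_ne_zero i).symm ?_
      ext c; simp; rfl
    rw [Matrix.det_succ_row_zero] at e2
    rw [← e2]
    refine (Finset.sum_congr rfl fun j _ => ?_).symm
    have hsub : (Matrix.of (Fin.cons (M i) M) : Matrix (Fin (n+1)) (Fin (n+1)) ℤ).submatrix
        Fin.succ j.succAbove = M.submatrix id j.succAbove := by
      ext r c; simp; rfl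
    rw [hsub]
    simp [hv]
    exact Or.inl rfl
  -- full Gram relation over ℚ
  have hfull : ∀ i i' : Fin n, ∑ k, (M i k : ℚ) * M i' k = if i = i' then (N : ℚ) else 0 := by
    intro i i'
    by_cases h : i = i'
    · subst h
      rw [if_pos rfl]
      exact_mod_cast (by simpa [sq] using hnorm i : ∑ k, M i k * M i k = N)
    · rw [if_neg h]
      exact_mod_cast horth i i' h
  -- diagonal identity
  have key2 : ∀ j : Fin (n+1), (v j : ℚ) ^ 2
      = (N : ℚ) ^ (n : ℕ) * (1 - (N : ℚ)⁻¹ * ∑ i, (M i j : ℚ) ^ 2) := by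
    intro j
    set B : Matrix (Fin n) (Fin n) ℚ := ((M.map (Int.cast : ℤ → ℚ)).submatrix id j.succAbove) with hB
    have hvB : (v j : ℚ) = B.det :=
      RingHom.map_det (Int.castRingHom ℚ) (M.submatrix id j.succAbove)
    have hBB : B * B.transpose = (N : ℚ) • (1 + Matrix.replicateCol Unit (fun i => -((N : ℚ)⁻¹ * M i j))
        * Matrix.replicateRow Unit (fun i => (M i j : ℚ))) := by
      ext i i'
      have hs := Fin.sum_univ_succAbove (fun k => (M i k : ℚ) * M i' k) j
      rw [hfull i i'] at hs
      simp only [Matrix.mul_apply, Matrix.smul_apply, Matrix.add_apply, Matrix.one_apply,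
        Matrix.transpose_apply, Matrix.replicateCol_apply, Matrix.replicateRow_apply, hB, Matrix.submatrix_apply,
        Matrix.map_apply, id_eq, smul_eq_mul, Finset.sum_const, Finset.card_univ,
        Fintype.univ_unit, Finset.card_singleton, one_smul]
      have hss : ∑ k : Fin n, (M i (j.succAbove k) : ℚ) * (M i' (j.succAbove k) : ℚ)
          = (if i = i' then (N:ℚ) else 0) - (M i j : ℚ) * M i' j := by
        linarith [hs]
      rw [hss]
      split_ifs with h <;> field_simp <;> ring
    have hdet := Matrix.det_one_add_replicateCol_mul_replicateRow (m := Fin n) (ι := Unit)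
      (fun i => -((N : ℚ)⁻¹ * M i j)) (fun i => (M i j : ℚ))
    calc (v j : ℚ) ^ 2 = B.det * B.transpose.det := by rw [hvB, Matrix.det_transpose, sq]
      _ = (B * B.transpose).det := (Matrix.det_mul _ _).symm
      _ = (N : ℚ) ^ (n : ℕ) * (1 + dotProduct (fun i => (M i j : ℚ)) (fun i => -((N : ℚ)⁻¹ * M i j))) := by
          rw [hBB, Matrix.det_smul, hdet]; simp
      _ = _ := by
          congr 1
          simp only [dotProduct, Finset.mul_sum]
          rw [sub_eq_add_neg, ← Finset.sum_neg_distrib]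
          refine congrArg _ (Finset.sum_congr rfl fun i _ => ?_)
          ring
  -- integer diagonal identity and divisibility
  have key2' : ∀ j, (v j) ^ 2 = (N ^ m) ^ 2 * (N - ∑ i, (M i j) ^ 2) := by
    intro j
    have h2 : ((v j ^ 2 : ℤ) : ℚ) = (((N ^ m) ^ 2 * (N - ∑ i, (M i j) ^ 2) : ℤ) : ℚ) := by
      have hp : (N : ℚ) ^ (n : ℕ) = (N : ℚ) ^ (2 * m + 1) := by rw [hm]
      push_cast
      rw [key2 j, hp]
      field_simp
      ring
    exact_mod_cast h2
  have hdvd : ∀ j, N ^ m ∣ v j := fun j =>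
    (IsIntegrallyClosed.pow_dvd_pow_iff two_ne_zero).mp
      ⟨N - ∑ i, (M i j) ^ 2, key2' j⟩
  have hNm : ((N : ℚ) ^ m) ≠ 0 := pow_ne_zero _ hNq
  refine ⟨?_, ?_, ?_⟩
  · intro j
    obtain ⟨t, ht⟩ := hdvd j
    refine ⟨(-1) ^ (j : ℕ) * t, ?_⟩
    rw [hwj j, ht]
    push_cast
    field_simp
  · intro i
    have h0 : ((∑ j : Fin (n + 1), (-1 : ℤ) ^ (j : ℕ) * M i j * v j : ℤ) : ℚ) = 0 := by
      rw [key1 i]; simp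
    push_cast at h0
    calc ∑ j, w j * M i j
        = ((N : ℚ) ^ m)⁻¹ * ∑ j : Fin (n+1), (-1 : ℚ) ^ (j : ℕ) * (M i j : ℚ) * (v j : ℚ) := by
          rw [Finset.mul_sum]
          exact Finset.sum_congr rfl fun j _ => by rw [hwj j]; ring
      _ = 0 := by rw [h0]; ring
  · have hsq : ∀ j, w j ^ 2 = (N : ℚ) - ∑ i, (M i j : ℚ) ^ 2 := by
      intro j
      have hp : (N : ℚ) ^ (n : ℕ) = (N : ℚ) ^ (2 * m + 1) := by rw [hm]
      rw [hwj j, mul_pow, mul_pow, key2 j, hp, ← pow_mul, pow_mul']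
      norm_num
      field_simp
      ring
    rw [Finset.sum_congr rfl fun j _ => hsq j, Finset.sum_sub_distrib, Finset.sum_const,
      Finset.card_univ, Finset.sum_comm]
    have hrow : ∀ i : Fin n, ∑ j, (M i j : ℚ) ^ 2 = (N : ℚ) := by
      intro i; exact_mod_cast hnorm i
    rw [Finset.sum_congr rfl fun i _ => hrow i, Finset.sum_const, Finset.card_univ]
    simp only [Fintype.card_fin, nsmul_eq_mul]
    push_cast
    ring
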